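/- If a graph G is the clique sum of two graphs G₁ and G₂ (i.e., G = (V₁∪V₂, E₁∪E₂) where V₁∩V₂ induces a clique in both G₁ and G₂), then gd(G) = max{gd(G₁), gd(G₂)}. -/

import Mathlib

open scoped RealInnerProductSpace
open Matrix

lemma sum_dite_le {r k : ℕ} (h : r ≤ k) (g : Fin r → ℝ) :
    (∑ j : Fin k, if hj : (j : ℕ) < r then g ⟨j, hj⟩ else 0) = ∑ i : Fin r, g i := by
  have h1 : (∑ i : Fin r, g i) = ∑ i : Fin r, (if hj : (i : ℕ) < r then g ⟨i, hj⟩ else 0) := by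
    refine Finset.sum_congr rfl fun i _ => ?_
    rw [dif_pos i.isLt]
  rw [h1, Fin.sum_univ_eq_sum_range (fun j => if hj : j < r then g ⟨j, hj⟩ else 0) k,
    Fin.sum_univ_eq_sum_range (fun j => if hj : j < r then g ⟨j, hj⟩ else 0) r]
  refine (Finset.sum_subset (Finset.range_subset_range.2 h) ?_).symm
  intro x _ hx
  rw [Finset.mem_range, not_lt] at hx
  rw [dif_neg (by omega)]

noncomputable def embedLE {r k : ℕ} (h : r ≤ k) :
    EuclideanSpace ℝ (Fin r) →ₗᵢ[ℝ] EuclideanSpace ℝ (Fin k) where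
  toFun x := WithLp.toLp 2 (fun j => if hj : (j : ℕ) < r then x ⟨j, hj⟩ else 0)
  map_add' x y := by ext j; by_cases hj : (j : ℕ) < r <;> simp [hj]
  map_smul' c x := by ext j; by_cases hj : (j : ℕ) < r <;> simp [hj]
  norm_map' x := by
    simp only [EuclideanSpace.norm_eq]
    congr 1
    calc (∑ j : Fin k, ‖if hj : (j : ℕ) < r then x ⟨j, hj⟩ else 0‖ ^ 2)
        = ∑ j : Fin k, (if hj : (j : ℕ) < r then ‖x ⟨j, hj⟩‖ ^ 2 else 0) := by
          refine Finset.sum_congr rfl fun j _ => ?_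
          by_cases hj : (j : ℕ) < r <;> simp [hj]
      _ = ∑ i : Fin r, ‖x i‖ ^ 2 := sum_dite_le h (fun i => ‖x i‖ ^ 2)

lemma gram_psd {I : Type*} [Fintype I] {k : ℕ} (v : I → EuclideanSpace ℝ (Fin k)) :
    (Matrix.of fun i j => (⟪v i, v j⟫ : ℝ)).PosSemidef ∧
      (Matrix.of fun i j => (⟪v i, v j⟫ : ℝ)).rank ≤ k := by
  set A : Matrix (Fin k) I ℝ := Matrix.of fun a i => v i a with hA
  have hM : (Matrix.of fun i j => (⟪v i, v j⟫ : ℝ)) = Aᴴ * A := by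
    ext i j
    simp [hA, Matrix.mul_apply, Matrix.conjTranspose_apply, PiLp.inner_apply, RCLike.inner_apply,
      mul_comm]
  constructor
  · rw [hM]; exact Matrix.posSemidef_conjTranspose_mul_self _
  · rw [hM]
    have h1 : Aᴴ = Aᵀ := by ext a i; simp [Matrix.conjTranspose_apply]
    rw [h1, Matrix.rank_transpose_mul_self]
    exact A.rank_le_card_height.trans (by simp)

lemma gram_exists {I : Type*} [Fintype I] {X : Matrix I I ℝ} (hX : X.PosSemidef) {k : ℕ}
    (hrank : X.rank ≤ k) :
    ∃ v : I → EuclideanSpace ℝ (Fin k), ∀ i j, X i j = ⟪v i, v j⟫ := by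
  classical
  set B := (open scoped MatrixOrder in CFC.sqrt X) with hBdef
  have hB : B.PosSemidef := by open scoped MatrixOrder in exact (CFC.sqrt_nonneg X).posSemidef
  have hBB : B * B = X := by open scoped MatrixOrder in exact CFC.sqrt_mul_sqrt_self X hX.nonneg
  have hBsymm : Bᵀ = B := by
    ext a b
    rw [Matrix.transpose_apply, ← hB.1.apply a b]
    simp
  set c : I → EuclideanSpace ℝ I := fun i => WithLp.toLp 2 (fun a => B a i) with hc
  have hcinner : ∀ i j, (⟪c i, c j⟫ : ℝ) = X i j := by
    intro i j
    simp only [PiLp.inner_apply, RCLike.inner_apply, conj_trivial, hc, PiLp.toLp_apply]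
    rw [← hBB, Matrix.mul_apply]
    refine Finset.sum_congr rfl fun a _ => ?_
    rw [show B a i = B i a from congrFun (congrFun hBsymm i) a, mul_comm]
  set W : Submodule ℝ (EuclideanSpace ℝ I) := Submodule.span ℝ (Set.range c) with hW
  have hWrank : Module.finrank ℝ W ≤ k := by
    let e := WithLp.linearEquiv 2 ℝ (I → ℝ)
    have h1 : Module.finrank ℝ W = Module.finrank ℝ (W.map e.toLinearMap) :=
      (LinearEquiv.finrank_map_eq e W).symm
    have h2 : W.map e.toLinearMap = Submodule.span ℝ (Set.range Bᵀ) := by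
      rw [hW, Submodule.map_span, ← Set.range_comp]
      have : ⇑e.toLinearMap ∘ c = Bᵀ := by
        funext i
        simp only [Function.comp_apply, WithLp.linearEquiv_apply, e]
        rfl
      rw [this]
    rw [h1, h2, show Bᵀ = B.col from rfl, ← Matrix.rank_eq_finrank_span_cols]
    calc B.rank = (Bᵀ * B).rank := by rw [Matrix.rank_transpose_mul_self]
      _ = X.rank := by rw [hBsymm, hBB]
      _ ≤ k := hrank
  have hmem : ∀ i, c i ∈ W := fun i => Submodule.subset_span ⟨i, rfl⟩
  set ι := (embedLE hWrank).comp (stdOrthonormalBasis ℝ W).repr.toLinearIsometry with hι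
  refine ⟨fun i => ι ⟨c i, hmem i⟩, fun i j => ?_⟩
  rw [ι.inner_map_map, Submodule.coe_inner, hcinner]

noncomputable def combo {I : Type*} [Fintype I] {E : Type*} [NormedAddCommGroup E]
    [InnerProductSpace ℝ E] (v : I → E) : (I → ℝ) →ₗ[ℝ] E where
  toFun c := ∑ i, c i • v i
  map_add' c d := by simp [add_smul, Finset.sum_add_distrib]
  map_smul' a c := by simp [smul_smul, Finset.smul_sum]

lemma combo_single {I : Type*} [Fintype I] [DecidableEq I] {E : Type*} [NormedAddCommGroup E]
    [InnerProductSpace ℝ E] (v : I → E) (i : I) : combo v (Pi.single i 1) = v i := by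
  simp only [combo, LinearMap.coe_mk, AddHom.coe_mk, Pi.single_apply, ite_smul, zero_smul]
  simp

lemma inner_combo {I : Type*} [Fintype I] {E : Type*} [NormedAddCommGroup E]
    [InnerProductSpace ℝ E] (v : I → E) (c d : I → ℝ) :
    (⟪combo v c, combo v d⟫ : ℝ) = ∑ i, ∑ j, c i * d j * ⟪v i, v j⟫ := by
  simp only [combo, LinearMap.coe_mk, AddHom.coe_mk, sum_inner, inner_sum,
    real_inner_smul_left, real_inner_smul_right]
  rw [Finset.sum_comm]
  refine Finset.sum_congr rfl fun i _ => Finset.sum_congr rfl fun j _ => by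
    rw [real_inner_comm]; ring

lemma isometry_of_gram {I : Type*} [Fintype I] {k : ℕ}
    (u w : I → EuclideanSpace ℝ (Fin k))
    (h : ∀ i j, (⟪w i, w j⟫ : ℝ) = ⟪u i, u j⟫) :
    ∃ O : EuclideanSpace ℝ (Fin k) →ₗᵢ[ℝ] EuclideanSpace ℝ (Fin k), ∀ i, O (w i) = u i := by
  classical
  have hinner : ∀ c d : I → ℝ, (⟪combo u c, combo u d⟫ : ℝ) = ⟪combo w c, combo w d⟫ := by
    intro c d
    rw [inner_combo, inner_combo]
    exact Finset.sum_congr rfl fun i _ => Finset.sum_congr rfl fun j _ => by rw [h]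
  have hker : LinearMap.ker (combo w) ≤ LinearMap.ker (combo u) := by
    intro c hc
    rw [LinearMap.mem_ker] at hc ⊢
    rw [← inner_self_eq_zero (𝕜 := ℝ), hinner, hc, inner_zero_right]
  set T : ↥(LinearMap.range (combo w)) →ₗ[ℝ] EuclideanSpace ℝ (Fin k) :=
    ((LinearMap.ker (combo w)).liftQ (combo u) hker).comp
      (combo w).quotKerEquivRange.symm.toLinearMap with hT
  have hTkey : ∀ c : I → ℝ, T ⟨combo w c, LinearMap.mem_range_self _ c⟩ = combo u c := by
    intro c
    rw [hT]
    simp only [LinearMap.coe_comp, Function.comp_apply, LinearEquiv.coe_coe]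
    rw [LinearMap.quotKerEquivRange_symm_apply_image, Submodule.mkQ_apply,
      Submodule.liftQ_apply]
  have hTnorm : ∀ s : ↥(LinearMap.range (combo w)), ‖T s‖ = ‖s‖ := by
    rintro ⟨s, c, rfl⟩
    rw [show (⟨combo w c, ⟨c, rfl⟩⟩ : ↥(LinearMap.range (combo w))) =
      ⟨combo w c, LinearMap.mem_range_self _ c⟩ from rfl, hTkey]
    show ‖(combo u) c‖ = ‖(combo w) c‖
    rw [norm_eq_sqrt_real_inner, norm_eq_sqrt_real_inner, hinner]
  set L : ↥(LinearMap.range (combo w)) →ₗᵢ[ℝ] EuclideanSpace ℝ (Fin k) := ⟨T, hTnorm⟩ with hL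
  refine ⟨L.extend, fun i => ?_⟩
  have hw : w i = combo w (Pi.single i 1) := (combo_single w i).symm
  have hmem : w i ∈ LinearMap.range (combo w) := hw ▸ LinearMap.mem_range_self _ _
  have : L.extend (w i) = L ⟨w i, hmem⟩ := LinearIsometry.extend_apply L ⟨w i, hmem⟩
  rw [this]
  show T ⟨w i, hmem⟩ = u i
  have : (⟨w i, hmem⟩ : ↥(LinearMap.range (combo w))) =
      ⟨combo w (Pi.single i 1), LinearMap.mem_range_self _ _⟩ := Subtype.ext hw
  rw [this, hTkey, combo_single]

/-- `Y` agrees with `X` on all diagonal entries and all entries indexed by edges of `G`. -/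
def agreesOn {V : Type*} (G : SimpleGraph V) (X Y : Matrix V V ℝ) : Prop :=
  (∀ i, Y i i = X i i) ∧ ∀ i j, G.Adj i j → Y i j = X i j

/-- `gramDimLE G k` : every psd matrix indexed by `V` admits a psd matrix of rank at most `k`
agreeing with it on the diagonal and on the edges of `G`. -/
def gramDimLE {V : Type*} [Fintype V] (G : SimpleGraph V) (k : ℕ) : Prop :=
  ∀ X : Matrix V V ℝ, X.PosSemidef →
    ∃ Y : Matrix V V ℝ, Y.PosSemidef ∧ Y.rank ≤ k ∧ agreesOn G X Y

/-- The Gram dimension of a graph. -/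
noncomputable def gramDim {V : Type*} [Fintype V] (G : SimpleGraph V) : ℕ :=
  sInf {k | gramDimLE G k}

lemma gramDimLE_mono {V : Type*} [Fintype V] {G : SimpleGraph V} {k l : ℕ} (hkl : k ≤ l)
    (h : gramDimLE G k) : gramDimLE G l := fun X hX => by
  obtain ⟨Y, h1, h2, h3⟩ := h X hX
  exact ⟨Y, h1, h2.trans hkl, h3⟩

lemma gramDimLE_card {V : Type*} [Fintype V] (G : SimpleGraph V) :
    gramDimLE G (Fintype.card V) := fun X hX =>
  ⟨X, hX, X.rank_le_card_height, fun _ => rfl, fun _ _ _ => rfl⟩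

lemma gramDimLE_restrict {V : Type*} [Fintype V] [DecidableEq V] {G G' : SimpleGraph V}
    (V' : Set V) [Fintype ↥V'] (hsub : G' ≤ G) {k : ℕ} (h : gramDimLE G k) :
    gramDimLE (G'.induce V') k := by
  classical
  intro X' hX'
  obtain ⟨c, hc⟩ := gram_exists hX' X'.rank_le_card_height
  set d : V → EuclideanSpace ℝ (Fin (Fintype.card ↥V')) :=
    fun i => if h : i ∈ V' then c ⟨i, h⟩ else 0 with hd
  obtain ⟨Y, hY1, hY2, hY3, hY4⟩ := h (Matrix.of fun i j => ⟪d i, d j⟫) (gram_psd d).1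
  obtain ⟨y, hy⟩ := gram_exists hY1 hY2
  refine ⟨Matrix.of fun a b : ↥V' => ⟪y a, y b⟫, (gram_psd _).1, (gram_psd _).2, ?_, ?_⟩
  · intro a
    show (⟪y ↑a, y ↑a⟫ : ℝ) = X' a a
    rw [← hy, hY3 ↑a]
    show (⟪d ↑a, d ↑a⟫ : ℝ) = X' a a
    rw [hd]
    simp only [a.2, dif_pos, Subtype.coe_eta]
    exact (hc a a).symm
  · intro a b hab
    have hG : G.Adj ↑a ↑b := hsub (SimpleGraph.comap_adj.mp hab)
    show (⟪y ↑a, y ↑b⟫ : ℝ) = X' a b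
    rw [← hy, hY4 ↑a ↑b hG]
    show (⟪d ↑a, d ↑b⟫ : ℝ) = X' a b
    rw [hd]
    simp only [a.2, b.2, dif_pos, Subtype.coe_eta]
    exact (hc a b).symm

lemma gramDimLE_glue {V : Type*} [Fintype V] [DecidableEq V]
    (G G₁ G₂ : SimpleGraph V) (V₁ V₂ : Set V) [Fintype ↥V₁] [Fintype ↥V₂]
    (hcover : V₁ ∪ V₂ = Set.univ)
    (hE₁ : ∀ u v, G₁.Adj u v → u ∈ V₁ ∧ v ∈ V₁)
    (hE₂ : ∀ u v, G₂.Adj u v → u ∈ V₂ ∧ v ∈ V₂)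
    (hclique : ∀ u ∈ V₁ ∩ V₂, ∀ v ∈ V₁ ∩ V₂, u ≠ v → G₁.Adj u v ∧ G₂.Adj u v)
    (hG : G = G₁ ⊔ G₂) {k : ℕ}
    (h₁ : gramDimLE (G₁.induce V₁) k) (h₂ : gramDimLE (G₂.induce V₂) k) :
    gramDimLE G k := by
  classical
  intro X hX
  obtain ⟨Y₁, hY₁psd, hY₁rank, hY₁d, hY₁e⟩ :=
    h₁ (X.submatrix (↑) (↑)) (hX.submatrix _)
  obtain ⟨Y₂, hY₂psd, hY₂rank, hY₂d, hY₂e⟩ :=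
    h₂ (X.submatrix (↑) (↑)) (hX.submatrix _)
  obtain ⟨u, hu⟩ := gram_exists hY₁psd hY₁rank
  obtain ⟨w, hw⟩ := gram_exists hY₂psd hY₂rank
  have hmem₂ : ∀ i, i ∉ V₁ → i ∈ V₂ := by
    intro i hi
    have : i ∈ V₁ ∪ V₂ := by rw [hcover]; trivial
    exact this.resolve_left hi
  have hgram : ∀ (i j : V) (hi1 : i ∈ V₁) (hi2 : i ∈ V₂) (hj1 : j ∈ V₁) (hj2 : j ∈ V₂),
      (⟪w ⟨i, hi2⟩, w ⟨j, hj2⟩⟫ : ℝ) = ⟪u ⟨i, hi1⟩, u ⟨j, hj1⟩⟫ := by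
    intro i j hi1 hi2 hj1 hj2
    rw [← hw, ← hu]
    by_cases hij : i = j
    · subst hij
      rw [hY₂d ⟨i, hi2⟩, hY₁d ⟨i, hi1⟩]
      rfl
    · have hadj := hclique i ⟨hi1, hi2⟩ j ⟨hj1, hj2⟩ hij
      rw [hY₂e ⟨i, hi2⟩ ⟨j, hj2⟩ (SimpleGraph.comap_adj.mpr hadj.2),
        hY₁e ⟨i, hi1⟩ ⟨j, hj1⟩ (SimpleGraph.comap_adj.mpr hadj.1)]
      rfl
  haveI : Fintype ↥(V₁ ∩ V₂) := Fintype.ofFinite _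
  obtain ⟨O, hO⟩ := isometry_of_gram (fun s : ↥(V₁ ∩ V₂) => u ⟨s.1, s.2.1⟩)
    (fun s => w ⟨s.1, s.2.2⟩) (fun s t => hgram s.1 t.1 s.2.1 s.2.2 t.2.1 t.2.2)
  set v : V → EuclideanSpace ℝ (Fin k) :=
    fun i => if h : i ∈ V₁ then u ⟨i, h⟩ else O (w ⟨i, hmem₂ i h⟩) with hv
  have hv₂ : ∀ i (h2 : i ∈ V₂), v i = O (w ⟨i, h2⟩) := by
    intro i h2
    by_cases h1 : i ∈ V₁
    · simp only [hv, dif_pos h1]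
      exact (hO ⟨i, ⟨h1, h2⟩⟩).symm
    · simp only [hv, dif_neg h1]
  refine ⟨Matrix.of fun i j => ⟪v i, v j⟫, (gram_psd v).1, (gram_psd v).2, ?_, ?_⟩
  · intro i
    show (⟪v i, v i⟫ : ℝ) = X i i
    by_cases h1 : i ∈ V₁
    · simp only [hv, dif_pos h1]
      rw [← hu]
      exact hY₁d ⟨i, h1⟩
    · have h2 := hmem₂ i h1
      rw [hv₂ i h2, O.inner_map_map, ← hw]
      exact hY₂d ⟨i, h2⟩
  · intro i j hij
    show (⟪v i, v j⟫ : ℝ) = X i j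
    rw [hG] at hij
    rcases hij with hij | hij
    · obtain ⟨hi1, hj1⟩ := hE₁ i j hij
      simp only [hv, dif_pos hi1, dif_pos hj1]
      rw [← hu]
      exact hY₁e ⟨i, hi1⟩ ⟨j, hj1⟩ (SimpleGraph.comap_adj.mpr hij)
    · obtain ⟨hi2, hj2⟩ := hE₂ i j hij
      rw [hv₂ i hi2, hv₂ j hj2, O.inner_map_map, ← hw]
      exact hY₂e ⟨i, hi2⟩ ⟨j, hj2⟩ (SimpleGraph.comap_adj.mpr hij)


/-- If `G` is the clique sum of `G₁` (with vertex set `V₁`) and `G₂` (with vertex set `V₂`),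
i.e. `G = G₁ ⊔ G₂` where `V₁ ∩ V₂` is a clique in both `G₁` and `G₂`, then
`gd(G) = max (gd(G₁), gd(G₂))`. -/
theorem gramDim_cliqueSum {V : Type*} [Fintype V] [DecidableEq V]
    (G G₁ G₂ : SimpleGraph V) (V₁ V₂ : Set V) [Fintype ↥V₁] [Fintype ↥V₂]
    (hcover : V₁ ∪ V₂ = Set.univ)
    (hE₁ : ∀ u v, G₁.Adj u v → u ∈ V₁ ∧ v ∈ V₁)
    (hE₂ : ∀ u v, G₂.Adj u v → u ∈ V₂ ∧ v ∈ V₂)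
    (hclique : ∀ u ∈ V₁ ∩ V₂, ∀ v ∈ V₁ ∩ V₂, u ≠ v → G₁.Adj u v ∧ G₂.Adj u v)
    (hG : G = G₁ ⊔ G₂) :
    gramDim G = max (gramDim (G₁.induce V₁)) (gramDim (G₂.induce V₂)) := by
  have h₁mem : gramDimLE (G₁.induce V₁) (gramDim (G₁.induce V₁)) :=
    Nat.sInf_mem (s := {k | gramDimLE _ k}) ⟨_, gramDimLE_card _⟩
  have h₂mem : gramDimLE (G₂.induce V₂) (gramDim (G₂.induce V₂)) :=
    Nat.sInf_mem (s := {k | gramDimLE _ k}) ⟨_, gramDimLE_card _⟩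
  have hGmem : gramDimLE G (gramDim G) := Nat.sInf_mem (s := {k | gramDimLE _ k}) ⟨_, gramDimLE_card _⟩
  refine le_antisymm ?_ (max_le ?_ ?_)
  · exact Nat.sInf_le (gramDimLE_glue G G₁ G₂ V₁ V₂ hcover hE₁ hE₂ hclique hG
      (gramDimLE_mono (le_max_left _ _) h₁mem) (gramDimLE_mono (le_max_right _ _) h₂mem))
  · exact Nat.sInf_le (gramDimLE_restrict V₁ (hG ▸ le_sup_left) hGmem)
  · exact Nat.sInf_le (gramDimLE_restrict V₂ (hG ▸ le_sup_right) hGmem)
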